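/- Let μ(J,h) be a ferromagnetic Ising model on n nodes (J_{ij} ≥ 0, h_i ≥ 0 for all i,j). Then for every subset S ⊆ [n], Pr(X_s = 1 for all s ∈ S) ≥ 2^{-|S|}. -/

import Mathlib

open Finset
open scoped BigOperators Classical symmDiff Nat

noncomputable section

/-- The value of a spin: `true ↦ 1`, `false ↦ -1`. -/
def spin (b : Bool) : ℝ := if b then 1 else -1

/-- Boltzmann weight of a configuration of the Ising model `μ(J,h)`. -/
def isingWeight (n : ℕ) (J : Fin n → Fin n → ℝ) (h : Fin n → ℝ) (x : Fin n → Bool) : ℝ :=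
  Real.exp ((1 / 2) * (∑ a, ∑ b, J a b * spin (x a) * spin (x b)) + ∑ a, h a * spin (x a))

/-- Partition function of the Ising model `μ(J,h)`. -/
def isingZ (n : ℕ) (J : Fin n → Fin n → ℝ) (h : Fin n → ℝ) : ℝ :=
  ∑ x : Fin n → Bool, isingWeight n J h x

namespace IsingAux

variable {n : ℕ}

/-- Character of the hypercube. -/
def chi (A : Finset (Fin n)) (x : Fin n → Bool) : ℝ := ∏ a ∈ A, spin (x a)

lemma spin_mul_self (b : Bool) : spin b * spin b = 1 := by cases b <;> norm_num [spin]

lemma chi_mul_chi (A B : Finset (Fin n)) (x : Fin n → Bool) :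
    chi A x * chi B x = chi (A ∆ B) x := by
  have hdis : Disjoint (A ∆ B) (A ∩ B) := by
    rw [Finset.disjoint_left]
    intro a ha hb
    rw [Finset.mem_symmDiff] at ha
    simp only [Finset.mem_inter] at hb
    tauto
  have hun : (A ∆ B) ∪ (A ∩ B) = A ∪ B := by
    have := symmDiff_sup_inf (a := A) (b := B)
    simpa [Finset.sup_eq_union, Finset.inf_eq_inter] using this
  calc chi A x * chi B x = (∏ a ∈ A ∪ B, spin (x a)) * ∏ a ∈ A ∩ B, spin (x a) :=
        (Finset.prod_union_inter).symm
    _ = ((∏ a ∈ A ∆ B, spin (x a)) * ∏ a ∈ A ∩ B, spin (x a)) * ∏ a ∈ A ∩ B, spin (x a) := by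
        rw [← hun, Finset.prod_union hdis]
    _ = chi (A ∆ B) x * ∏ a ∈ A ∩ B, (spin (x a) * spin (x a)) := by
        rw [Finset.prod_mul_distrib, chi]; ring
    _ = chi (A ∆ B) x := by
        simp [spin_mul_self]

lemma sum_chi (A : Finset (Fin n)) :
    ∑ x : Fin n → Bool, chi A x = if A = ∅ then (2:ℝ)^n else 0 := by
  have key : ∀ x : Fin n → Bool,
      (∏ a : Fin n, if a ∈ A then spin (x a) else 1) = chi A x := by
    intro x
    rw [Finset.prod_ite_mem univ A (fun a => spin (x a)), Finset.univ_inter, chi]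
  have h1 : ∑ x : Fin n → Bool, chi A x
      = ∏ a : Fin n, ∑ b : Bool, (if a ∈ A then spin b else 1) := by
    rw [Fintype.prod_sum (f := fun a b => if a ∈ A then spin b else 1)]
    exact Finset.sum_congr rfl fun x _ => (key x).symm
  rw [h1]
  by_cases hA : A = ∅
  · subst hA; simp
  · rw [if_neg hA]
    obtain ⟨a, ha⟩ := Finset.nonempty_iff_ne_empty.mpr hA
    apply Finset.prod_eq_zero (Finset.mem_univ a)
    simp [ha, spin]

lemma sum_chi_nonneg (A : Finset (Fin n)) :
    0 ≤ ∑ x : Fin n → Bool, chi A x := by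
  rw [sum_chi]; split <;> positivity

/-- Unnormalized Fourier coefficient. -/
def chat (g : (Fin n → Bool) → ℝ) (A : Finset (Fin n)) : ℝ :=
  ∑ x : Fin n → Bool, g x * chi A x

/-- `Pos g` : all Fourier coefficients of `g` are nonnegative. -/
def Pos (g : (Fin n → Bool) → ℝ) : Prop := ∀ A : Finset (Fin n), 0 ≤ chat g A

lemma inversion (g : (Fin n → Bool) → ℝ) (x : Fin n → Bool) :
    ∑ A : Finset (Fin n), chat g A * chi A x = (2:ℝ)^n * g x := by
  have h1 : ∀ y : Fin n → Bool, ∑ A : Finset (Fin n), chi A y * chi A x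
      = if y = x then (2:ℝ)^n else 0 := by
    intro y
    have h2 : ∀ A : Finset (Fin n), chi A y * chi A x
        = ∏ a ∈ A, (spin (y a) * spin (x a)) := by
      intro A; rw [chi, chi, ← Finset.prod_mul_distrib]
    have h3 : ∑ A : Finset (Fin n), chi A y * chi A x
        = ∏ a : Fin n, (spin (y a) * spin (x a) + 1) := by
      rw [Finset.prod_add]
      rw [← Finset.powerset_univ]
      exact Finset.sum_congr rfl fun A _ => by rw [h2]; simp
    rw [h3]
    by_cases hxy : y = x
    · subst hxy
      rw [if_pos rfl]
      calc ∏ a : Fin n, (spin (y a) * spin (y a) + 1) = ∏ _a : Fin n, (2:ℝ) := by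
            exact Finset.prod_congr rfl fun a _ => by rw [spin_mul_self]; norm_num
        _ = (2:ℝ)^n := by simp
    · rw [if_neg hxy]
      obtain ⟨a, ha⟩ : ∃ a, y a ≠ x a := by
        by_contra hc; push_neg at hc; exact hxy (funext hc)
      apply Finset.prod_eq_zero (Finset.mem_univ a)
      cases hb : y a <;> cases hb' : x a <;> simp_all [spin]
  calc ∑ A : Finset (Fin n), chat g A * chi A x
      = ∑ A : Finset (Fin n), ∑ y : Fin n → Bool, g y * (chi A y * chi A x) := by
        refine Finset.sum_congr rfl fun A _ => ?_
        rw [chat, Finset.sum_mul]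
        exact Finset.sum_congr rfl fun y _ => by ring
    _ = ∑ y : Fin n → Bool, g y * ∑ A : Finset (Fin n), chi A y * chi A x := by
        rw [Finset.sum_comm]
        exact Finset.sum_congr rfl fun y _ => by rw [Finset.mul_sum]
    _ = (2:ℝ)^n * g x := by
        rw [Finset.sum_congr rfl fun y (_ : y ∈ univ) => by rw [h1 y]]
        simp only [mul_ite, mul_zero]
        rw [Finset.sum_ite_eq' univ x (fun y => g y * (2:ℝ)^n)]
        simp [mul_comm]

lemma Pos.mul {f g : (Fin n → Bool) → ℝ} (hf : Pos f) (hg : Pos g) :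
    Pos (fun x => f x * g x) := by
  intro A
  have h2 : (2:ℝ)^n * chat (fun x => f x * g x) A
      = ∑ B : Finset (Fin n), chat g B * chat f (A ∆ B) := by
    calc (2:ℝ)^n * chat (fun x => f x * g x) A
        = ∑ x : Fin n → Bool, f x * chi A x * ((2:ℝ)^n * g x) := by
          rw [chat, Finset.mul_sum]
          exact Finset.sum_congr rfl fun x _ => by ring
      _ = ∑ x : Fin n → Bool, f x * chi A x * ∑ B : Finset (Fin n), chat g B * chi B x := by
          exact Finset.sum_congr rfl fun x _ => by rw [inversion]
      _ = ∑ x : Fin n → Bool, ∑ B : Finset (Fin n), chat g B * (f x * (chi A x * chi B x)) := by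
          refine Finset.sum_congr rfl fun x _ => ?_
          rw [Finset.mul_sum]
          exact Finset.sum_congr rfl fun B _ => by ring
      _ = ∑ B : Finset (Fin n), chat g B * ∑ x : Fin n → Bool, f x * chi (A ∆ B) x := by
          rw [Finset.sum_comm]
          refine Finset.sum_congr rfl fun B _ => ?_
          rw [Finset.mul_sum]
          exact Finset.sum_congr rfl fun x _ => by rw [chi_mul_chi]
      _ = ∑ B : Finset (Fin n), chat g B * chat f (A ∆ B) := rfl
  have h3 : 0 ≤ (2:ℝ)^n * chat (fun x => f x * g x) A := by
    rw [h2]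
    exact Finset.sum_nonneg fun B _ => mul_nonneg (hg B) (hf (A ∆ B))
  have h4 : (0:ℝ) < (2:ℝ)^n := by positivity
  nlinarith [h3, h4]

lemma Pos.add {f g : (Fin n → Bool) → ℝ} (hf : Pos f) (hg : Pos g) :
    Pos (fun x => f x + g x) := by
  intro A
  have : chat (fun x => f x + g x) A = chat f A + chat g A := by
    rw [chat, chat, chat, ← Finset.sum_add_distrib]
    exact Finset.sum_congr rfl fun x _ => by ring
  rw [this]; exact add_nonneg (hf A) (hg A)

lemma Pos.smul {c : ℝ} (hc : 0 ≤ c) {g : (Fin n → Bool) → ℝ} (hg : Pos g) :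
    Pos (fun x => c * g x) := by
  intro A
  have : chat (fun x => c * g x) A = c * chat g A := by
    rw [chat, chat, Finset.mul_sum]
    exact Finset.sum_congr rfl fun x _ => by ring
  rw [this]; exact mul_nonneg hc (hg A)

lemma Pos_const {c : ℝ} (hc : 0 ≤ c) : Pos (fun _ : Fin n → Bool => c) := by
  intro A
  have : chat (fun _ : Fin n → Bool => c) A = c * ∑ x : Fin n → Bool, chi A x := by
    rw [chat, Finset.mul_sum]
  rw [this]
  exact mul_nonneg hc (sum_chi_nonneg A)

lemma Pos_chi (B : Finset (Fin n)) : Pos (chi B) := by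
  intro A
  have : chat (chi B) A = ∑ x : Fin n → Bool, chi (B ∆ A) x := by
    rw [chat]
    exact Finset.sum_congr rfl fun x _ => by rw [chi_mul_chi]
  rw [this]; exact sum_chi_nonneg _

lemma Pos_sum {ι : Type*} (s : Finset ι) (g : ι → (Fin n → Bool) → ℝ)
    (hg : ∀ i ∈ s, Pos (g i)) : Pos (fun x => ∑ i ∈ s, g i x) := by
  intro A
  have h1 : chat (fun x => ∑ i ∈ s, g i x) A = ∑ i ∈ s, chat (g i) A := by
    rw [chat]
    rw [Finset.sum_congr rfl fun x (_ : x ∈ univ) => Finset.sum_mul s (fun i => g i x) (chi A x)]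
    rw [Finset.sum_comm]
    rfl
  rw [h1]
  exact Finset.sum_nonneg fun i hi => hg i hi A

lemma Pos.pow {f : (Fin n → Bool) → ℝ} (hf : Pos f) :
    ∀ k : ℕ, Pos (fun x => f x ^ k)
  | 0 => by simpa using Pos_const (n := n) (zero_le_one)
  | k + 1 => by
      have h1 := (Pos.pow hf k).mul hf
      have : (fun x => f x ^ k * f x) = fun x => f x ^ (k + 1) := by
        funext x; rw [pow_succ]
      rwa [this] at h1

lemma Pos.exp {f : (Fin n → Bool) → ℝ} (hf : Pos f) :
    Pos (fun x => Real.exp (f x)) := by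
  intro A
  have hsum : ∀ x : Fin n → Bool, Summable (fun k : ℕ => f x ^ k / k ! * chi A x) :=
    fun x => (Real.summable_pow_div_factorial (f x)).mul_right _
  have hexp : ∀ t : ℝ, Real.exp t = ∑' k : ℕ, t ^ k / k ! := by
    intro t
    rw [Real.exp_eq_exp_ℝ, NormedSpace.exp_eq_tsum_div]
  have key : chat (fun x => Real.exp (f x)) A
      = ∑' k : ℕ, ∑ x : Fin n → Bool, f x ^ k / k ! * chi A x := by
    rw [chat]
    rw [Finset.sum_congr rfl fun x (_ : x ∈ univ) => by rw [hexp (f x), ← tsum_mul_right]]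
    exact (Summable.tsum_finsetSum fun x _ => hsum x).symm
  rw [key]
  apply tsum_nonneg
  intro k
  have h5 : ∑ x : Fin n → Bool, f x ^ k / k ! * chi A x
      = (1 / (k ! : ℝ)) * chat (fun x => f x ^ k) A := by
    rw [chat, Finset.mul_sum]
    exact Finset.sum_congr rfl fun x _ => by ring
  rw [h5]
  exact mul_nonneg (by positivity) (hf.pow k A)

lemma pos_weight (J : Fin n → Fin n → ℝ) (h : Fin n → ℝ)
    (hJ : ∀ a b, 0 ≤ J a b) (hh : ∀ a, 0 ≤ h a) :
    Pos (isingWeight n J h) := by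
  have hF : Pos (fun x : Fin n → Bool =>
      (1 / 2) * (∑ a, ∑ b, J a b * spin (x a) * spin (x b)) + ∑ a, h a * spin (x a)) := by
    apply Pos.add
    · have he : (fun x : Fin n → Bool =>
          (1 / 2 : ℝ) * (∑ a, ∑ b, J a b * spin (x a) * spin (x b)))
          = fun x => ∑ a, ∑ b, (1 / 2 * J a b) * (chi {a} x * chi {b} x) := by
        funext x
        rw [Finset.mul_sum]
        refine Finset.sum_congr rfl fun a _ => ?_
        rw [Finset.mul_sum]
        refine Finset.sum_congr rfl fun b _ => ?_
        simp [chi]; ring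
      rw [he]
      refine Pos_sum _ _ fun a _ => ?_
      refine Pos_sum _ _ fun b _ => ?_
      exact Pos.smul (by have := hJ a b; linarith) ((Pos_chi {a}).mul (Pos_chi {b}))
    · have he : (fun x : Fin n → Bool => ∑ a, h a * spin (x a))
          = fun x => ∑ a, h a * chi {a} x := by
        funext x
        refine Finset.sum_congr rfl fun a _ => ?_
        simp [chi]
      rw [he]
      refine Pos_sum _ _ fun a _ => ?_
      exact Pos.smul (hh a) (Pos_chi {a})
  exact hF.exp

end IsingAux

open IsingAux

/-- In a ferromagnetic Ising model, `Pr(X_s = 1 for all s ∈ S) ≥ 2^{-|S|}`. -/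
theorem all_plus_prob_lb (n : ℕ) (J : Fin n → Fin n → ℝ) (h : Fin n → ℝ)
    (hsymm : ∀ a b, J a b = J b a) (hdiag : ∀ a, J a a = 0)
    (hJ : ∀ a b, 0 ≤ J a b) (hh : ∀ a, 0 ≤ h a)
    (S : Finset (Fin n)) :
    (∑ x : Fin n → Bool, if ∀ s ∈ S, x s = true then isingWeight n J h x else 0) /
        isingZ n J h ≥ (1 / 2 : ℝ) ^ S.card := by
  classical
  set w := isingWeight n J h with hw_def
  have hwpos : ∀ x, 0 < w x := fun x => Real.exp_pos _
  have hZ : 0 < isingZ n J h := by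
    apply Finset.sum_pos (fun x _ => hwpos x)
    exact ⟨fun _ => true, Finset.mem_univ _⟩
  have hPos : Pos w := pos_weight J h hJ hh
  rw [ge_iff_le, le_div_iff₀ hZ]
  -- rewrite the numerator
  have key : ∀ x : Fin n → Bool,
      (if ∀ s ∈ S, x s = true then w x else 0)
      = (1 / 2 : ℝ) ^ S.card * ∑ A ∈ S.powerset, w x * chi A x := by
    intro x
    have h1 : ∑ A ∈ S.powerset, chi A x = ∏ s ∈ S, (spin (x s) + 1) := by
      rw [Finset.prod_add]
      refine (Finset.sum_congr rfl fun A _ => ?_).symm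
      simp [chi]
    have h2 : (if ∀ s ∈ S, x s = true then w x else 0)
        = w x * ∏ s ∈ S, ((spin (x s) + 1) / 2) := by
      by_cases hx : ∀ s ∈ S, x s = true
      · rw [if_pos hx]
        have : ∏ s ∈ S, ((spin (x s) + 1) / 2) = ∏ _s ∈ S, (1:ℝ) := by
          refine Finset.prod_congr rfl fun s hs => ?_
          rw [hx s hs]; norm_num [spin]
        rw [this]; simp
      · rw [if_neg hx]
        push_neg at hx
        obtain ⟨s, hs, hxs⟩ := hx
        have hxf : x s = false := by
          cases hb : x s
          · rfl
          · exact absurd hb hxs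
        rw [Finset.prod_eq_zero hs (by rw [hxf]; norm_num [spin]), mul_zero]
    rw [h2, Finset.mul_sum]
    have h3 : ∏ s ∈ S, ((spin (x s) + 1) / 2)
        = (1 / 2 : ℝ) ^ S.card * ∏ s ∈ S, (spin (x s) + 1) := by
      rw [Finset.prod_div_distrib, Finset.prod_const]
      field_simp
      rw [mul_assoc, ← mul_pow]; norm_num
    rw [h3, ← h1, Finset.mul_sum, Finset.mul_sum]
    exact Finset.sum_congr rfl fun A _ => by ring
  calc (1 / 2 : ℝ) ^ S.card * isingZ n J h
      = (1 / 2 : ℝ) ^ S.card * chat w ∅ := by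
        congr 1
        rw [chat, isingZ]
        exact (Finset.sum_congr rfl fun x _ => by simp [chi, hw_def]).symm
    _ ≤ (1 / 2 : ℝ) ^ S.card * ∑ A ∈ S.powerset, chat w A := by
        apply mul_le_mul_of_nonneg_left _ (by positivity)
        exact Finset.single_le_sum (f := chat w) (fun A _ => hPos A)
          (Finset.empty_mem_powerset S)
    _ = ∑ x : Fin n → Bool, (if ∀ s ∈ S, x s = true then w x else 0) := by
        rw [Finset.sum_congr rfl fun x (_ : x ∈ univ) => key x]
        rw [← Finset.mul_sum, Finset.sum_comm]
        rfl

end
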